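/- Let Ω be a finite state space with |Ω| ≥ 3 and let X: Ω → ℝ be a non-constant security. Then X is separable under every information structure (for any number n ≥ 1 of traders) possessing the fine-join property if and only if X is an Arrow–Debreu security or of three-value form. -/

import Mathlib

noncomputable section
open scoped Classical
open Finset

/-- A partition of `Ω` given by its cell map: `C ω` is the cell containing `ω`. -/
def IsPartitionFun {Ω : Type*} (C : Ω → Set Ω) : Prop :=
  (∀ ω, ω ∈ C ω) ∧ ∀ ω ω', ω' ∈ C ω → C ω' = C ω

/-- The fine-join property: the intersection of all traders' cells at `ω` is `{ω}`. -/
def FineJoin {Ω : Type*} {n : ℕ} (C : Fin n → Ω → Set Ω) : Prop :=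
  ∀ ω ω', (∀ i, ω' ∈ C i ω) → ω' = ω

/-- A prior: a probability distribution on the finite state space. -/
def IsPrior {Ω : Type*} [Fintype Ω] (μ : Ω → ℝ) : Prop :=
  (∀ ω, 0 ≤ μ ω) ∧ ∑ ω, μ ω = 1

/-- Support of a prior. -/
def suppSet {Ω : Type*} (μ : Ω → ℝ) : Set Ω := {ω | 0 < μ ω}

/-- Conditional expectation `E_μ[X | S]`. -/
def condExp {Ω : Type*} [Fintype Ω] (μ X : Ω → ℝ) (S : Set Ω) : ℝ :=
  (∑ ω, if ω ∈ S then μ ω * X ω else 0) / (∑ ω, if ω ∈ S then μ ω else 0)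

/-- `X` is non-separable at prior `μ` with value `v` under the information structure `C`. -/
def NonSeparableAt {Ω : Type*} [Fintype Ω] {n : ℕ}
    (C : Fin n → Ω → Set Ω) (X μ : Ω → ℝ) (v : ℝ) : Prop :=
  (∃ ω ∈ suppSet μ, X ω ≠ v) ∧
  ∀ (i : Fin n) (ω : Ω), ω ∈ suppSet μ → condExp μ X (C i ω) = v

/-- `X` is separable under the information structure `C`. -/
def SeparableSec {Ω : Type*} [Fintype Ω] {n : ℕ}
    (C : Fin n → Ω → Set Ω) (X : Ω → ℝ) : Prop :=
  ¬ ∃ (μ : Ω → ℝ) (v : ℝ), IsPrior μ ∧ NonSeparableAt C X μ v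

/-- Arrow–Debreu security: pays `a` at one state, `b ≠ a` at all other states. -/
def ArrowDebreu {Ω : Type*} (X : Ω → ℝ) : Prop :=
  ∃ (a b : ℝ) (ωs : Ω), a ≠ b ∧ X ωs = a ∧ ∀ ω, ω ≠ ωs → X ω = b

/-- Three-value form: pays `a < b < d` with `a` at one state, `d` at another, `b` elsewhere. -/
def ThreeValueForm {Ω : Type*} (X : Ω → ℝ) : Prop :=
  ∃ (a b d : ℝ) (ωa ωd : Ω), a < b ∧ b < d ∧ ωa ≠ ωd ∧
    X ωa = a ∧ X ωd = d ∧ ∀ ω, ω ≠ ωa → ω ≠ ωd → X ω = b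

lemma condExp_eq_of {Ω : Type*} [Fintype Ω] (μ X : Ω → ℝ) (S : Set Ω) (c : ℝ)
    (hμ : ∀ ω, 0 ≤ μ ω) (hS : ∀ ω ∈ S, 0 < μ ω → X ω = c)
    (hex : ∃ ω ∈ S, 0 < μ ω) : condExp μ X S = c := by
  obtain ⟨ω0, hω0S, hω0⟩ := hex
  have hD : 0 < ∑ ω, if ω ∈ S then μ ω else 0 := by
    apply Finset.sum_pos'
    · intro i _; split <;> simp [hμ i]
    · exact ⟨ω0, Finset.mem_univ _, by simp [hω0S, hω0]⟩
  have hN : (∑ ω, if ω ∈ S then μ ω * X ω else 0)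
      = c * ∑ ω, if ω ∈ S then μ ω else 0 := by
    rw [Finset.mul_sum]
    apply Finset.sum_congr rfl
    intro ω _
    split
    · rename_i h
      rcases (hμ ω).lt_or_eq with h'| h'
      · rw [hS ω h h']; ring
      · rw [← h']; ring
    · ring
  rw [condExp, hN, mul_div_assoc, div_self hD.ne', mul_one]

lemma condExp_lt_of {Ω : Type*} [Fintype Ω] (μ X : Ω → ℝ) (S : Set Ω) (b : ℝ)
    (hμ : ∀ ω, 0 ≤ μ ω) (hS : ∀ ω ∈ S, 0 < μ ω → X ω ≤ b)
    (hex : ∃ ω ∈ S, 0 < μ ω ∧ X ω < b) : condExp μ X S < b := by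
  obtain ⟨ω0, hω0S, hω0, hX0⟩ := hex
  have hD : 0 < ∑ ω, if ω ∈ S then μ ω else 0 := by
    apply Finset.sum_pos'
    · intro i _; split <;> simp [hμ i]
    · exact ⟨ω0, Finset.mem_univ _, by simp [hω0S, hω0]⟩
  have hN : (∑ ω, if ω ∈ S then μ ω * X ω else 0)
      < b * ∑ ω, if ω ∈ S then μ ω else 0 := by
    rw [Finset.mul_sum]
    apply Finset.sum_lt_sum
    · intro ω _
      split
      · rename_i h
        rcases (hμ ω).lt_or_eq with h'| h'
        · nlinarith [hS ω h h']
        · rw [← h']; ring_nf; simp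
      · simp
    · refine ⟨ω0, Finset.mem_univ _, ?_⟩
      simp only [hω0S, if_pos]
      nlinarith
  rw [condExp, div_lt_iff₀ hD]
  linarith [hN]

lemma condExp_gt_of {Ω : Type*} [Fintype Ω] (μ X : Ω → ℝ) (S : Set Ω) (b : ℝ)
    (hμ : ∀ ω, 0 ≤ μ ω) (hS : ∀ ω ∈ S, 0 < μ ω → b ≤ X ω)
    (hex : ∃ ω ∈ S, 0 < μ ω ∧ b < X ω) : b < condExp μ X S := by
  obtain ⟨ω0, hω0S, hω0, hX0⟩ := hex
  have hD : 0 < ∑ ω, if ω ∈ S then μ ω else 0 := by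
    apply Finset.sum_pos'
    · intro i _; split <;> simp [hμ i]
    · exact ⟨ω0, Finset.mem_univ _, by simp [hω0S, hω0]⟩
  have hN : b * (∑ ω, if ω ∈ S then μ ω else 0)
      < ∑ ω, if ω ∈ S then μ ω * X ω else 0 := by
    rw [Finset.mul_sum]
    apply Finset.sum_lt_sum
    · intro ω _
      split
      · rename_i h
        rcases (hμ ω).lt_or_eq with h'| h'
        · nlinarith [hS ω h h']
        · rw [← h']; ring_nf; simp
      · simp
    · refine ⟨ω0, Finset.mem_univ _, ?_⟩
      simp only [hω0S, if_pos]
      nlinarith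
  rw [condExp, lt_div_iff₀ hD]
  linarith [hN]

lemma sum_ite_pair {Ω : Type*} [Fintype Ω] (a b : Ω) (hab : a ≠ b) (f : Ω → ℝ)
    [inst : ∀ ω : Ω, Decidable (ω ∈ ({a, b} : Set Ω))] :
    (∑ ω, if ω ∈ ({a, b} : Set Ω) then f ω else 0) = f a + f b := by
  rw [← Finset.sum_subset (Finset.subset_univ ({a, b} : Finset Ω))
    (fun x _ hx => by
      simp only [Finset.mem_insert, Finset.mem_singleton] at hx
      push_neg at hx
      rw [if_neg]
      simp only [Set.mem_insert_iff, Set.mem_singleton_iff]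
      push_neg
      exact hx)]
  rw [Finset.sum_pair hab, if_pos (by simp), if_pos (by simp)]

lemma condExp_pair {Ω : Type*} [Fintype Ω] (μ X : Ω → ℝ) (a b : Ω) (hab : a ≠ b) :
    condExp μ X ({a, b} : Set Ω) = (μ a * X a + μ b * X b) / (μ a + μ b) := by
  rw [condExp,
    sum_ite_pair a b hab (fun ω => μ ω * X ω) (inst := fun ω => Classical.propDecidable _),
    sum_ite_pair a b hab μ (inst := fun ω => Classical.propDecidable _)]

lemma good_implies_sep {Ω : Type*} [Fintype Ω] (X : Ω → ℝ)
    (hgood : ArrowDebreu X ∨ ThreeValueForm X)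
    {n : ℕ} (hn : 1 ≤ n) (C : Fin n → Ω → Set Ω)
    (hC : ∀ i, IsPartitionFun (C i)) (hFJ : FineJoin C) : SeparableSec C X := by
  rintro ⟨μ, v, ⟨hμ0, _⟩, ⟨⟨ωx, hωxs, hωxv⟩, hcond⟩⟩
  have hωx : 0 < μ ωx := hωxs
  set i0 : Fin n := ⟨0, hn⟩ with hi0
  have hsep : ∀ ω ω', ω' ≠ ω → ∃ i, ω' ∉ C i ω := by
    intro ω ω' hne
    by_contra h
    push_neg at h
    exact hne (hFJ ω ω' h)
  have hmem : ∀ (i : Fin n) ω, ω ∈ C i ω := fun i ω => (hC i).1 ω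
  rcases hgood with ⟨a, b, ωs, hab, hXs, hXo⟩ | ⟨a, b, d, ωa, ωd, hab, hbd, hadne, hXa, hXd, hXb⟩
  · -- Arrow–Debreu
    by_cases hs : 0 < μ ωs
    · by_cases hall : ∀ ω, 0 < μ ω → ω = ωs
      · have hva : v = a := by
          rw [← hcond i0 ωs hs]
          exact condExp_eq_of μ X _ a hμ0
            (fun ω _ hμω => by rw [hall ω hμω]; exact hXs)
            ⟨ωs, hmem i0 ωs, hs⟩
        exact hωxv (by rw [hall ωx hωx, hXs, hva])
      · push_neg at hall
        obtain ⟨ω', hμ', hne'⟩ := hall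
        obtain ⟨i, hi⟩ := hsep ω' ωs (Ne.symm hne')
        have hvb : v = b := by
          rw [← hcond i ω' hμ']
          exact condExp_eq_of μ X _ b hμ0
            (fun ω hω _ => hXo ω (by rintro rfl; exact hi hω))
            ⟨ω', hmem i ω', hμ'⟩
        have hcs := hcond i0 ωs hs
        rcases hab.lt_or_gt with hlt | hlt
        · have : condExp μ X (C i0 ωs) < b := by
            apply condExp_lt_of μ X _ b hμ0
            · intro ω _ _
              by_cases hω : ω = ωs
              · rw [hω, hXs]; linarith
              · rw [hXo ω hω]
            · exact ⟨ωs, hmem i0 ωs, hs, by rw [hXs]; exact hlt⟩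
          rw [hcs, hvb] at this; exact lt_irrefl b this
        · have : b < condExp μ X (C i0 ωs) := by
            apply condExp_gt_of μ X _ b hμ0
            · intro ω _ _
              by_cases hω : ω = ωs
              · rw [hω, hXs]; linarith
              · rw [hXo ω hω]
            · exact ⟨ωs, hmem i0 ωs, hs, by rw [hXs]; exact hlt⟩
          rw [hcs, hvb] at this; exact lt_irrefl b this
    · have hvb : v = b := by
        rw [← hcond i0 ωx hωx]
        exact condExp_eq_of μ X _ b hμ0
          (fun ω _ hμω => hXo ω (by rintro rfl; exact hs hμω))
          ⟨ωx, hmem i0 ωx, hωx⟩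
      exact hωxv (by rw [hXo ωx (by rintro rfl; exact hs hωx), hvb])
  · -- Three-value form
    have step_a : 0 < μ ωa → v < b := by
      intro ha
      obtain ⟨i, hi⟩ := hsep ωa ωd (Ne.symm hadne)
      rw [← hcond i ωa ha]
      apply condExp_lt_of μ X _ b hμ0
      · intro ω hω _
        by_cases h1 : ω = ωa
        · rw [h1, hXa]; linarith
        · rw [hXb ω h1 (by rintro rfl; exact hi hω)]
      · exact ⟨ωa, hmem i ωa, ha, by rw [hXa]; exact hab⟩
    have step_d : 0 < μ ωd → b < v := by
      intro hd
      obtain ⟨i, hi⟩ := hsep ωd ωa hadne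
      rw [← hcond i ωd hd]
      apply condExp_gt_of μ X _ b hμ0
      · intro ω hω _
        by_cases h1 : ω = ωd
        · rw [h1, hXd]; linarith
        · rw [hXb ω (by rintro rfl; exact hi hω) h1]
      · exact ⟨ωd, hmem i ωd, hd, by rw [hXd]; exact hbd⟩
    by_cases ha : 0 < μ ωa
    · have hvb := step_a ha
      by_cases hd : 0 < μ ωd
      · linarith [step_d hd]
      · by_cases hall : ∀ ω, 0 < μ ω → ω = ωa
        · have hva : v = a := by
            rw [← hcond i0 ωa ha]
            exact condExp_eq_of μ X _ a hμ0
              (fun ω _ hμω => by rw [hall ω hμω]; exact hXa)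
              ⟨ωa, hmem i0 ωa, ha⟩
          exact hωxv (by rw [hall ωx hωx, hXa, hva])
        · push_neg at hall
          obtain ⟨ω', hμ', hne'⟩ := hall
          obtain ⟨i, hi⟩ := hsep ω' ωa (Ne.symm hne')
          have : v = b := by
            rw [← hcond i ω' hμ']
            exact condExp_eq_of μ X _ b hμ0
              (fun ω hω hμω => hXb ω (by rintro rfl; exact hi hω)
                (by rintro rfl; exact hd hμω))
              ⟨ω', hmem i ω', hμ'⟩
          linarith
    · by_cases hd : 0 < μ ωd
      · have hvb := step_d hd
        by_cases hall : ∀ ω, 0 < μ ω → ω = ωd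
        · have hvd : v = d := by
            rw [← hcond i0 ωd hd]
            exact condExp_eq_of μ X _ d hμ0
              (fun ω _ hμω => by rw [hall ω hμω]; exact hXd)
              ⟨ωd, hmem i0 ωd, hd⟩
          exact hωxv (by rw [hall ωx hωx, hXd, hvd])
        · push_neg at hall
          obtain ⟨ω', hμ', hne'⟩ := hall
          obtain ⟨i, hi⟩ := hsep ω' ωd (Ne.symm hne')
          have : v = b := by
            rw [← hcond i ω' hμ']
            exact condExp_eq_of μ X _ b hμ0
              (fun ω hω hμω => hXb ω (by rintro rfl; exact ha hμω)
                (by rintro rfl; exact hi hω))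
              ⟨ω', hmem i ω', hμ'⟩
          linarith
      · have hvb : v = b := by
          rw [← hcond i0 ωx hωx]
          exact condExp_eq_of μ X _ b hμ0
            (fun ω _ hμω => hXb ω (by rintro rfl; exact ha hμω)
              (by rintro rfl; exact hd hμω))
            ⟨ωx, hmem i0 ωx, hωx⟩
        exact hωxv (by
          rw [hXb ωx (by rintro rfl; exact ha hωx) (by rintro rfl; exact hd hωx), hvb])

lemma exists_four {Ω : Type*} [Fintype Ω] (hcard : 3 ≤ Fintype.card Ω) (X : Ω → ℝ)
    (hnc : ¬ ∃ cst : ℝ, ∀ ω, X ω = cst)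
    (hAD : ¬ ArrowDebreu X) (h3 : ¬ ThreeValueForm X) :
    ∃ (v : ℝ) (ω1 ω2 ω3 ω4 : Ω), ω1 ≠ ω3 ∧ ω2 ≠ ω4 ∧
      v < X ω1 ∧ v < X ω3 ∧ X ω2 < v ∧ X ω4 < v := by
  have hne : Nonempty Ω := Fintype.card_pos_iff.mp (by omega)
  obtain ⟨ωmin, -, hmin⟩ := Finset.exists_min_image Finset.univ X Finset.univ_nonempty
  obtain ⟨ωmax, -, hmax⟩ := Finset.exists_max_image Finset.univ X Finset.univ_nonempty
  have hmin : ∀ ω, X ωmin ≤ X ω := fun ω => hmin ω (Finset.mem_univ ω)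
  have hmax : ∀ ω, X ω ≤ X ωmax := fun ω => hmax ω (Finset.mem_univ ω)
  push_neg at hnc
  have hmM : X ωmin < X ωmax := by
    obtain ⟨ω, hω⟩ := hnc (X ωmin)
    exact lt_of_lt_of_le (lt_of_le_of_ne (hmin ω) (Ne.symm hω)) (hmax ω)
  by_cases h2min : ∃ ω', ω' ≠ ωmin ∧ X ω' = X ωmin
  · obtain ⟨ωm', hm'ne, hm'⟩ := h2min
    by_cases h2max : ∃ ω'', ω'' ≠ ωmax ∧ X ω'' = X ωmax
    · obtain ⟨ωM', hM'ne, hM'⟩ := h2max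
      exact ⟨(X ωmin + X ωmax) / 2, ωmax, ωmin, ωM', ωm',
        Ne.symm hM'ne, Ne.symm hm'ne, by linarith, by rw [hM']; linarith,
        by linarith, by rw [hm']; linarith⟩
    · push_neg at h2max
      have hmid : ∃ ω0, X ωmin < X ω0 ∧ X ω0 < X ωmax := by
        by_contra h
        push_neg at h
        apply hAD
        refine ⟨X ωmax, X ωmin, ωmax, ne_of_gt hmM, rfl, fun ω hω => ?_⟩
        by_contra hne2
        have h1 : X ωmin < X ω := lt_of_le_of_ne (hmin ω) (Ne.symm hne2)
        exact h2max ω hω (le_antisymm (hmax ω) (h ω h1))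
      obtain ⟨ω0, hm0, h0M⟩ := hmid
      refine ⟨(X ωmin + X ω0) / 2, ω0, ωmin, ωmax, ωm', ?_, Ne.symm hm'ne,
        by linarith, by linarith, by linarith, by rw [hm']; linarith⟩
      intro h; rw [h] at h0M; exact lt_irrefl _ h0M
  · push_neg at h2min
    by_cases h2max : ∃ ω'', ω'' ≠ ωmax ∧ X ω'' = X ωmax
    · obtain ⟨ωM', hM'ne, hM'⟩ := h2max
      have hmid : ∃ ω0, X ωmin < X ω0 ∧ X ω0 < X ωmax := by
        by_contra h
        push_neg at h
        apply hAD
        refine ⟨X ωmin, X ωmax, ωmin, ne_of_lt hmM, rfl, fun ω hω => ?_⟩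
        have h1 : X ωmin < X ω := lt_of_le_of_ne (hmin ω) (Ne.symm (h2min ω hω))
        exact le_antisymm (hmax ω) (h ω h1)
      obtain ⟨ω0, hm0, h0M⟩ := hmid
      refine ⟨(X ω0 + X ωmax) / 2, ωmax, ω0, ωM', ωmin, Ne.symm hM'ne, ?_,
        by linarith, by rw [hM']; linarith, by linarith, by linarith⟩
      intro h; rw [h] at hm0; exact lt_irrefl _ hm0
    · push_neg at h2max
      have hmMne : ωmin ≠ ωmax := fun h => by rw [h] at hmM; exact lt_irrefl _ hmM
      have hex0 : ∃ ω0, ω0 ≠ ωmin ∧ ω0 ≠ ωmax := by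
        by_contra h
        push_neg at h
        have hsub : (Finset.univ : Finset Ω) ⊆ {ωmin, ωmax} := by
          intro ω _
          by_cases hω : ω = ωmin
          · simp [hω]
          · simp [h ω hω]
        have := Finset.card_le_card hsub
        have h2 : ({ωmin, ωmax} : Finset Ω).card ≤ 2 := by
          apply le_trans (Finset.card_insert_le _ _); simp
        rw [Finset.card_univ] at this
        omega
      obtain ⟨ω0, h0min, h0max⟩ := hex0
      have hm0 : X ωmin < X ω0 := lt_of_le_of_ne (hmin ω0) (Ne.symm (h2min ω0 h0min))
      have h0M : X ω0 < X ωmax := lt_of_le_of_ne (hmax ω0) (h2max ω0 h0max)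
      have hex1 : ∃ ω1', ω1' ≠ ωmin ∧ ω1' ≠ ωmax ∧ X ω1' ≠ X ω0 := by
        by_contra h
        push_neg at h
        exact h3 ⟨X ωmin, X ω0, X ωmax, ωmin, ωmax, hm0, h0M, hmMne, rfl, rfl, h⟩
      obtain ⟨ω1', hn1, hn2, hneval⟩ := hex1
      have hm1 : X ωmin < X ω1' := lt_of_le_of_ne (hmin ω1') (Ne.symm (h2min ω1' hn1))
      have h1M : X ω1' < X ωmax := lt_of_le_of_ne (hmax ω1') (h2max ω1' hn2)
      rcases lt_or_gt_of_ne hneval with hlt | hgt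
      · exact ⟨(X ω1' + X ω0) / 2, ω0, ω1', ωmax, ωmin, h0max, hn1,
          by linarith, by linarith, by linarith, by linarith⟩
      · exact ⟨(X ω0 + X ω1') / 2, ω1', ω0, ωmax, ωmin, hn2, h0min,
          by linarith, by linarith, by linarith, by linarith⟩

lemma construct {Ω : Type*} [Fintype Ω] (X : Ω → ℝ) (v : ℝ) (ω1 ω2 ω3 ω4 : Ω)
    (h13 : ω1 ≠ ω3) (h24 : ω2 ≠ ω4)
    (hx1 : v < X ω1) (hx3 : v < X ω3) (hx2 : X ω2 < v) (hx4 : X ω4 < v) :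
    ∃ (C : Fin 2 → Ω → Set Ω),
      (∀ i, IsPartitionFun (C i)) ∧ FineJoin C ∧
      ∃ (μ : Ω → ℝ), IsPrior μ ∧ NonSeparableAt C X μ v := by
  have h12 : ω1 ≠ ω2 := fun h => by rw [h] at hx1; linarith
  have h14 : ω1 ≠ ω4 := fun h => by rw [h] at hx1; linarith
  have h32 : ω3 ≠ ω2 := fun h => by rw [h] at hx3; linarith
  have h34 : ω3 ≠ ω4 := fun h => by rw [h] at hx3; linarith
  have h23 : ω2 ≠ ω3 := Ne.symm h32
  -- weights
  set q1 : ℝ := 1 / (X ω1 - v) with hq1def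
  set q2 : ℝ := 1 / (v - X ω2) with hq2def
  set q3 : ℝ := 1 / (X ω3 - v) with hq3def
  set q4 : ℝ := 1 / (v - X ω4) with hq4def
  have hq1 : 0 < q1 := by rw [hq1def]; apply one_div_pos.mpr; linarith
  have hq2 : 0 < q2 := by rw [hq2def]; apply one_div_pos.mpr; linarith
  have hq3 : 0 < q3 := by rw [hq3def]; apply one_div_pos.mpr; linarith
  have hq4 : 0 < q4 := by rw [hq4def]; apply one_div_pos.mpr; linarith
  have k1 : q1 * (X ω1 - v) = 1 := by
    rw [hq1def]; exact one_div_mul_cancel (by linarith)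
  have k2 : q2 * (v - X ω2) = 1 := by
    rw [hq2def]; exact one_div_mul_cancel (by linarith)
  have k3 : q3 * (X ω3 - v) = 1 := by
    rw [hq3def]; exact one_div_mul_cancel (by linarith)
  have k4 : q4 * (v - X ω4) = 1 := by
    rw [hq4def]; exact one_div_mul_cancel (by linarith)
  set Q : ℝ := q1 + q2 + q3 + q4 with hQdef
  have hQ : 0 < Q := by rw [hQdef]; linarith
  set w : Ω → ℝ := fun ω =>
    if ω = ω1 then q1 else if ω = ω2 then q2 else if ω = ω3 then q3
    else if ω = ω4 then q4 else 0 with hwdef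
  set μ : Ω → ℝ := fun ω => w ω / Q with hμdef
  have hw1 : w ω1 = q1 := by rw [hwdef]; simp
  have hw2 : w ω2 = q2 := by rw [hwdef]; simp [Ne.symm h12]
  have hw3 : w ω3 = q3 := by rw [hwdef]; simp [Ne.symm h13, h32]
  have hw4 : w ω4 = q4 := by rw [hwdef]; simp [Ne.symm h14, Ne.symm h24, Ne.symm h34]
  have hμ1 : μ ω1 = q1 / Q := by rw [hμdef]; simp [hw1]
  have hμ2 : μ ω2 = q2 / Q := by rw [hμdef]; simp [hw2]
  have hμ3 : μ ω3 = q3 / Q := by rw [hμdef]; simp [hw3]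
  have hμ4 : μ ω4 = q4 / Q := by rw [hμdef]; simp [hw4]
  have hμnn : ∀ ω, 0 ≤ μ ω := by
    intro ω
    rw [hμdef]
    apply div_nonneg _ hQ.le
    rw [hwdef]
    simp only
    split_ifs <;> linarith
  -- the partitions
  set C0 : Ω → Set Ω := fun ω =>
    if ω = ω1 ∨ ω = ω2 then {ω1, ω2}
    else if ω = ω3 ∨ ω = ω4 then {ω3, ω4} else {ω} with hC0def
  set C1 : Ω → Set Ω := fun ω =>
    if ω = ω2 ∨ ω = ω3 then {ω2, ω3}
    else if ω = ω1 ∨ ω = ω4 then {ω1, ω4} else {ω} with hC1def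
  have hC01 : C0 ω1 = ({ω1, ω2} : Set Ω) := by rw [hC0def]; simp
  have hC02 : C0 ω2 = ({ω1, ω2} : Set Ω) := by rw [hC0def]; simp
  have hC03 : C0 ω3 = ({ω3, ω4} : Set Ω) := by rw [hC0def]; simp [Ne.symm h13, h32]
  have hC04 : C0 ω4 = ({ω3, ω4} : Set Ω) := by
    rw [hC0def]; simp [Ne.symm h14, Ne.symm h24]
  have hC0o : ∀ ω, ω ≠ ω1 → ω ≠ ω2 → ω ≠ ω3 → ω ≠ ω4 → C0 ω = ({ω} : Set Ω) := by
    intro ω e1 e2 e3 e4; rw [hC0def]; simp [e1, e2, e3, e4]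
  have hC11 : C1 ω1 = ({ω1, ω4} : Set Ω) := by rw [hC1def]; simp [h12, h13]
  have hC12 : C1 ω2 = ({ω2, ω3} : Set Ω) := by rw [hC1def]; simp
  have hC13 : C1 ω3 = ({ω2, ω3} : Set Ω) := by rw [hC1def]; simp [h32]
  have hC14 : C1 ω4 = ({ω1, ω4} : Set Ω) := by
    rw [hC1def]; simp [Ne.symm h24, Ne.symm h34]
  have hC1o : ∀ ω, ω ≠ ω1 → ω ≠ ω2 → ω ≠ ω3 → ω ≠ ω4 → C1 ω = ({ω} : Set Ω) := by
    intro ω e1 e2 e3 e4; rw [hC1def]; simp [e1, e2, e3, e4]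
  refine ⟨![C0, C1], ?_, ?_, ?_⟩
  · -- partitions
    rw [Fin.forall_fin_two]
    constructor
    · constructor
      · intro ω
        by_cases e1 : ω = ω1
        · rw [Matrix.cons_val_zero, e1, hC01]; simp
        · by_cases e2 : ω = ω2
          · rw [Matrix.cons_val_zero, e2, hC02]; simp
          · by_cases e3 : ω = ω3
            · rw [Matrix.cons_val_zero, e3, hC03]; simp
            · by_cases e4 : ω = ω4
              · rw [Matrix.cons_val_zero, e4, hC04]; simp
              · rw [Matrix.cons_val_zero, hC0o ω e1 e2 e3 e4]; simp
      · intro ω ω' hmem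
        rw [Matrix.cons_val_zero] at hmem ⊢
        by_cases e1 : ω = ω1 ∨ ω = ω2
        · have hcell : C0 ω = ({ω1, ω2} : Set Ω) := by
            rcases e1 with rfl | rfl
            · exact hC01
            · exact hC02
          rw [hcell] at hmem
          rcases hmem with rfl | hmem
          · rw [hC01, hcell]
          · rw [Set.mem_singleton_iff] at hmem; rw [hmem, hC02, hcell]
        · by_cases e2 : ω = ω3 ∨ ω = ω4
          · have hcell : C0 ω = ({ω3, ω4} : Set Ω) := by
              rcases e2 with rfl | rfl
              · exact hC03
              · exact hC04
            rw [hcell] at hmem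
            rcases hmem with rfl | hmem
            · rw [hC03, hcell]
            · rw [Set.mem_singleton_iff] at hmem; rw [hmem, hC04, hcell]
          · push_neg at e1 e2
            rw [hC0o ω e1.1 e1.2 e2.1 e2.2, Set.mem_singleton_iff] at hmem
            rw [hmem]
    · constructor
      · intro ω
        by_cases e1 : ω = ω1
        · rw [Matrix.cons_val_one, Matrix.cons_val_zero, e1, hC11]; simp
        · by_cases e2 : ω = ω2
          · rw [Matrix.cons_val_one, Matrix.cons_val_zero, e2, hC12]; simp
          · by_cases e3 : ω = ω3
            · rw [Matrix.cons_val_one, Matrix.cons_val_zero, e3, hC13]; simp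
            · by_cases e4 : ω = ω4
              · rw [Matrix.cons_val_one, Matrix.cons_val_zero, e4, hC14]; simp
              · rw [Matrix.cons_val_one, Matrix.cons_val_zero, hC1o ω e1 e2 e3 e4]; simp
      · intro ω ω' hmem
        rw [Matrix.cons_val_one, Matrix.cons_val_zero] at hmem ⊢
        by_cases e1 : ω = ω2 ∨ ω = ω3
        · have hcell : C1 ω = ({ω2, ω3} : Set Ω) := by
            rcases e1 with rfl | rfl
            · exact hC12
            · exact hC13
          rw [hcell] at hmem
          rcases hmem with rfl | hmem
          · rw [hC12, hcell]
          · rw [Set.mem_singleton_iff] at hmem; rw [hmem, hC13, hcell]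
        · by_cases e2 : ω = ω1 ∨ ω = ω4
          · have hcell : C1 ω = ({ω1, ω4} : Set Ω) := by
              rcases e2 with rfl | rfl
              · exact hC11
              · exact hC14
            rw [hcell] at hmem
            rcases hmem with rfl | hmem
            · rw [hC11, hcell]
            · rw [Set.mem_singleton_iff] at hmem; rw [hmem, hC14, hcell]
          · push_neg at e1 e2
            rw [hC1o ω e2.1 e1.1 e1.2 e2.2, Set.mem_singleton_iff] at hmem
            rw [hmem]
  · -- fine join
    intro ω ω' h
    have h0 : ω' ∈ C0 ω := by have := h 0; rwa [Matrix.cons_val_zero] at this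
    have h1 : ω' ∈ C1 ω := by
      have := h 1; rwa [Matrix.cons_val_one, Matrix.cons_val_zero] at this
    by_cases e1 : ω = ω1
    · rw [e1, hC01] at h0; rw [e1, hC11] at h1; rw [e1]
      rcases h0 with rfl | h0
      · rfl
      · rw [Set.mem_singleton_iff] at h0; rw [h0] at h1 ⊢
        rcases h1 with h' | h'
        · exact h'
        · rw [Set.mem_singleton_iff] at h'; exact absurd h' h24
    · by_cases e2 : ω = ω2
      · rw [e2, hC02] at h0; rw [e2, hC12] at h1; rw [e2]
        rcases h1 with rfl | h1
        · rfl
        · rw [Set.mem_singleton_iff] at h1; rw [h1] at h0 ⊢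
          rcases h0 with h' | h'
          · exact absurd h' (Ne.symm h13)
          · rw [Set.mem_singleton_iff] at h'; exact absurd h' h32
      · by_cases e3 : ω = ω3
        · rw [e3, hC03] at h0; rw [e3, hC13] at h1; rw [e3]
          rcases h0 with rfl | h0
          · rfl
          · rw [Set.mem_singleton_iff] at h0; rw [h0] at h1 ⊢
            rcases h1 with h' | h'
            · exact absurd h' (Ne.symm h24)
            · rw [Set.mem_singleton_iff] at h'; exact absurd h' (Ne.symm h34)
        · by_cases e4 : ω = ω4
          · rw [e4, hC04] at h0; rw [e4, hC14] at h1; rw [e4]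
            rcases h0 with rfl | h0
            · rcases h1 with h' | h'
              · exact absurd h' (Ne.symm h13)
              · rw [Set.mem_singleton_iff] at h'; exact h'
            · rw [Set.mem_singleton_iff] at h0; exact h0
          · rw [hC0o ω e1 e2 e3 e4, Set.mem_singleton_iff] at h0
            exact h0
  · -- the prior and non-separability
    refine ⟨μ, ⟨hμnn, ?_⟩, ⟨ω1, ?_, ne_of_gt hx1⟩, ?_⟩
    · -- sums to one
      have hsumw : ∑ ω, w ω = Q := by
        rw [← Finset.sum_subset (Finset.subset_univ ({ω1, ω2, ω3, ω4} : Finset Ω))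
          (fun x _ hx => by
            simp only [Finset.mem_insert, Finset.mem_singleton] at hx
            push_neg at hx
            rw [hwdef]
            simp [hx.1, hx.2.1, hx.2.2.1, hx.2.2.2])]
        rw [Finset.sum_insert (by simp [h12, h13, h14]),
          Finset.sum_insert (by simp [h23, h24]),
          Finset.sum_insert (by simp [h34]), Finset.sum_singleton,
          hw1, hw2, hw3, hw4, hQdef]
        ring
      rw [hμdef]
      simp only
      rw [← Finset.sum_div, hsumw, div_self hQ.ne']
    · -- ω1 in support
      show 0 < μ ω1
      rw [hμ1]
      positivity
    · -- all conditional expectations equal v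
      have key12 : condExp μ X ({ω1, ω2} : Set Ω) = v := by
        rw [condExp_pair μ X ω1 ω2 h12, hμ1, hμ2]
        rw [div_eq_iff (by positivity : (q1 / Q + q2 / Q : ℝ) ≠ 0)]
        linear_combination k1 / Q - k2 / Q
      have key34 : condExp μ X ({ω3, ω4} : Set Ω) = v := by
        rw [condExp_pair μ X ω3 ω4 h34, hμ3, hμ4]
        rw [div_eq_iff (by positivity : (q3 / Q + q4 / Q : ℝ) ≠ 0)]
        linear_combination k3 / Q - k4 / Q
      have key23 : condExp μ X ({ω2, ω3} : Set Ω) = v := by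
        rw [condExp_pair μ X ω2 ω3 h23, hμ2, hμ3]
        rw [div_eq_iff (by positivity : (q2 / Q + q3 / Q : ℝ) ≠ 0)]
        linear_combination k3 / Q - k2 / Q
      have key14 : condExp μ X ({ω1, ω4} : Set Ω) = v := by
        rw [condExp_pair μ X ω1 ω4 h14, hμ1, hμ4]
        rw [div_eq_iff (by positivity : (q1 / Q + q4 / Q : ℝ) ≠ 0)]
        linear_combination k1 / Q - k4 / Q
      intro i ω hω
      have hω' : 0 < μ ω := hω
      have hωmem : ω = ω1 ∨ ω = ω2 ∨ ω = ω3 ∨ ω = ω4 := by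
        by_contra hcon
        push_neg at hcon
        have hzero : w ω = 0 := by
          rw [hwdef]; simp [hcon.1, hcon.2.1, hcon.2.2.1, hcon.2.2.2]
        rw [hμdef] at hω'
        simp only [hzero, zero_div] at hω'
        exact lt_irrefl 0 hω'
      fin_cases i
      · show condExp μ X (C0 ω) = v
        rcases hωmem with rfl | rfl | rfl | rfl
        · rw [hC01]; exact key12
        · rw [hC02]; exact key12
        · rw [hC03]; exact key34
        · rw [hC04]; exact key34
      · show condExp μ X (C1 ω) = v
        rcases hωmem with rfl | rfl | rfl | rfl
        · rw [hC11]; exact key14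
        · rw [hC12]; exact key23
        · rw [hC13]; exact key23
        · rw [hC14]; exact key14

/-- classification of always-separable non-constant securities. -/
theorem always_separable_iff {Ω : Type*} [Fintype Ω]
    (hcard : 3 ≤ Fintype.card Ω) (X : Ω → ℝ)
    (hnc : ¬ ∃ cst : ℝ, ∀ ω, X ω = cst) :
    (∀ (n : ℕ), 1 ≤ n → ∀ C : Fin n → Ω → Set Ω,
        (∀ i, IsPartitionFun (C i)) → FineJoin C → SeparableSec C X)
      ↔ (ArrowDebreu X ∨ ThreeValueForm X) := by
  constructor
  · intro hall
    by_contra hbad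
    rw [not_or] at hbad
    obtain ⟨v, ω1, ω2, ω3, ω4, h13, h24, hx1, hx3, hx2, hx4⟩ :=
      exists_four hcard X hnc hbad.1 hbad.2
    obtain ⟨C, hpart, hFJ, μ, hprior, hns⟩ :=
      construct X v ω1 ω2 ω3 ω4 h13 h24 hx1 hx3 hx2 hx4
    exact hall 2 (by norm_num) C hpart hFJ ⟨μ, v, hprior, hns⟩
  · intro hgood n hn C hC hFJ
    exact good_implies_sep X hgood hn C hC hFJ
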